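/- (Omitting types.) Let n ≥ 2, let A be a countable transposition algebra of dimension n, let a ∈ A be nonzero, and let X ⊆ A be such that 0 is the greatest lower bound of X. Then there is a homomorphism h : A → 𝒫(Perm(Fin n)) (preserving ⊓ as ∩, complement as complement in Perm(Fin n), 1 as Perm(Fin n), and with h(s_{ij}x) = {ξ : ξ ∘ [i,j] ∈ h(x)}) such that h(a) ≠ ∅ and ⋂_{x ∈ X} h(x) = ∅. -/

import Mathlib

/-- A transposition algebra with dimensions indexed by `ι`: a Boolean algebra with unary
operations `s i j` (for `i ≠ j`) satisfying the equation set `Σ_n`. -/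
structure TranspositionAlgebra (ι : Type*) (A : Type*) [BooleanAlgebra A] where
  s : ι → ι → A → A
  map_inf : ∀ i j : ι, i ≠ j → ∀ x y : A, s i j (x ⊓ y) = s i j x ⊓ s i j y
  map_compl : ∀ i j : ι, i ≠ j → ∀ x : A, s i j xᶜ = (s i j x)ᶜ
  symm : ∀ i j : ι, i ≠ j → s i j = s j i
  invol : ∀ i j : ι, i ≠ j → ∀ x : A, s i j (s i j x) = x
  comm : ∀ i j k l : ι, i ≠ j → k ≠ l → i ≠ k → i ≠ l → j ≠ k → j ≠ l →
    ∀ x : A, s i j (s k l x) = s k l (s i j x)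
  braid : ∀ i j k : ι, i ≠ j → j ≠ k → i ≠ k →
    ∀ x : A, s i j (s j k (s i j x)) = s i k x

namespace TAhelper

theorem swap_disj {α : Type*} [DecidableEq α] {a b c d : α} (hac : a ≠ c) (had : a ≠ d)
    (hbc : b ≠ c) (hbd : b ≠ d) :
    Equiv.swap a b * Equiv.swap c d = Equiv.swap c d * Equiv.swap a b := by
  ext x
  simp only [Equiv.Perm.mul_apply, Equiv.swap_apply_def]
  split_ifs <;> simp_all

theorem swap_id1 {α : Type*} [DecidableEq α] {m j a : α} (hmj : m ≠ j) (ham : a ≠ m)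
    (haj : a ≠ j) : Equiv.swap m j * Equiv.swap a j = Equiv.swap a j * Equiv.swap a m := by
  ext x
  simp only [Equiv.Perm.mul_apply, Equiv.swap_apply_def]
  split_ifs <;> simp_all

theorem swap_id2 {α : Type*} [DecidableEq α] {m j a : α} (hmj : m ≠ j) (ham : a ≠ m)
    (haj : a ≠ j) : Equiv.swap m j * Equiv.swap a m = Equiv.swap a j * Equiv.swap j m := by
  ext x
  simp only [Equiv.Perm.mul_apply, Equiv.swap_apply_def]
  split_ifs <;> simp_all


variable {n : ℕ} {A : Type*} [BooleanAlgebra A]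

/-- fixes every point with index ≥ k -/
def FixAbove (k : ℕ) (ρ : Equiv.Perm (Fin n)) : Prop := ∀ x : Fin n, k ≤ x.val → ρ x = x

def Fa (M : TranspositionAlgebra (Fin n) A) : ℕ → Equiv.Perm (Fin n) → A → A
  | 0, _ => id
  | (k+1), ρ =>
    if hk : k < n then
      if ρ ⟨k, hk⟩ = ⟨k, hk⟩ then Fa M k ρ
      else Fa M k (ρ * Equiv.swap ⟨k, hk⟩ (ρ⁻¹ ⟨k, hk⟩)) ∘ M.s ⟨k, hk⟩ (ρ⁻¹ ⟨k, hk⟩)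
    else Fa M k ρ

variable (M : TranspositionAlgebra (Fin n) A)

theorem Fa_stab : ∀ m k (ρ : Equiv.Perm (Fin n)), k ≤ m → FixAbove k ρ →
    Fa M m ρ = Fa M k ρ := by
  intro m
  induction m with
  | zero => intro k ρ hk _; interval_cases k; rfl
  | succ m ih =>
    intro k ρ hk hfix
    rcases Nat.eq_or_lt_of_le hk with h | h
    · rw [h]
    · have hkm : k ≤ m := Nat.lt_succ_iff.mp h
      show Fa M (m+1) ρ = _
      rw [Fa]
      split_ifs with h1 h2
      · exact ih k ρ hkm hfix
      · exact absurd (hfix ⟨m, h1⟩ (by exact hkm)) h2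
      · exact ih k ρ hkm hfix

def G (ρ : Equiv.Perm (Fin n)) : A → A := Fa M n ρ

theorem G_one : G M (1 : Equiv.Perm (Fin n)) = id := by
  have : FixAbove 0 (1 : Equiv.Perm (Fin n)) := fun x _ => rfl
  rw [G, Fa_stab M n 0 1 (Nat.zero_le n) this]; rfl

theorem Fa_inf : ∀ k (ρ : Equiv.Perm (Fin n)) (x y : A),
    Fa M k ρ (x ⊓ y) = Fa M k ρ x ⊓ Fa M k ρ y := by
  intro k
  induction k with
  | zero => intro ρ x y; rfl
  | succ k ih =>
    intro ρ x y
    rw [Fa]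
    split_ifs with h1 h2
    · exact ih ρ x y
    · have hne : (⟨k, h1⟩ : Fin n) ≠ ρ⁻¹ ⟨k, h1⟩ := by
        intro he
        exact h2 (by conv_lhs => rw [he, Equiv.Perm.coe_inv, Equiv.apply_symm_apply])
      simp only [Function.comp_apply, M.map_inf _ _ hne, ih]
    · exact ih ρ x y

theorem Fa_compl : ∀ k (ρ : Equiv.Perm (Fin n)) (x : A),
    Fa M k ρ xᶜ = (Fa M k ρ x)ᶜ := by
  intro k
  induction k with
  | zero => intro ρ x; rfl
  | succ k ih =>
    intro ρ x
    rw [Fa]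
    split_ifs with h1 h2
    · exact ih ρ x
    · have hne : (⟨k, h1⟩ : Fin n) ≠ ρ⁻¹ ⟨k, h1⟩ := by
        intro he
        exact h2 (by conv_lhs => rw [he, Equiv.Perm.coe_inv, Equiv.apply_symm_apply])
      simp only [Function.comp_apply, M.map_compl _ _ hne, ih]
    · exact ih ρ x

theorem Fa_bot (k : ℕ) (ρ : Equiv.Perm (Fin n)) : Fa M k ρ ⊥ = ⊥ := by
  have h := Fa_inf M k ρ (⊥ : A) ⊥ᶜ
  rw [inf_compl_eq_bot, Fa_compl, inf_compl_eq_bot] at h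
  exact h

theorem Fa_top (k : ℕ) (ρ : Equiv.Perm (Fin n)) : Fa M k ρ ⊤ = ⊤ := by
  have h : Fa M k ρ (⊥ : A)ᶜ = (Fa M k ρ ⊥)ᶜ := Fa_compl M k ρ ⊥
  rw [Fa_bot, compl_bot] at h
  exact h

theorem mono_of_inf {g : A → A} (hg : ∀ x y, g (x ⊓ y) = g x ⊓ g y) :
    ∀ x y, x ≤ y → g x ≤ g y := by
  intro x y hxy
  have h : g (x ⊓ y) = g x ⊓ g y := hg x y
  rw [inf_eq_left.mpr hxy] at h
  rw [h]
  exact inf_le_right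

theorem Fa_inv : ∀ k (ρ : Equiv.Perm (Fin n)), ∃ g : A → A,
    (∀ x y : A, x ≤ y → g x ≤ g y) ∧ (∀ x, g (Fa M k ρ x) = x) ∧ (∀ x, Fa M k ρ (g x) = x) := by
  intro k
  induction k with
  | zero => exact fun ρ => ⟨id, fun _ _ h => h, fun _ => rfl, fun _ => rfl⟩
  | succ k ih =>
    intro ρ
    rw [Fa]
    split_ifs with h1 h2
    · exact ih ρ
    · obtain ⟨g, hmono, hgl, hgr⟩ := ih (ρ * Equiv.swap ⟨k, h1⟩ (ρ⁻¹ ⟨k, h1⟩))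
      have hne : (⟨k, h1⟩ : Fin n) ≠ ρ⁻¹ ⟨k, h1⟩ := by
        intro he
        exact h2 (by conv_lhs => rw [he, Equiv.Perm.coe_inv, Equiv.apply_symm_apply])
      set i : Fin n := ⟨k, h1⟩
      set j := ρ⁻¹ i
      refine ⟨M.s i j ∘ g, ?_, ?_, ?_⟩
      · intro x y hxy
        have := mono_of_inf (fun x y => M.map_inf i j hne x y)
        exact this _ _ (hmono x y hxy)
      · intro x
        simp only [Function.comp_apply, hgl, M.invol i j hne]
      · intro x
        simp only [Function.comp_apply, M.invol i j hne, hgr]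
    · exact ih ρ


theorem braid' (i j k : Fin n) (hij : i ≠ j) (hjk : j ≠ k) (hik : i ≠ k) (x : A) :
    M.s i j (M.s j k x) = M.s i k (M.s i j x) := by
  have h := M.braid i j k hij hjk hik (M.s i j x)
  rwa [M.invol i j hij x] at h

theorem G_step (i c : Fin n) (hci : c.val < i.val) (ρ : Equiv.Perm (Fin n))
    (hfix : FixAbove i.val ρ) :
    G M (ρ * Equiv.swap c i) = G M ρ ∘ M.s i c := by
  have hci' : c ≠ i := Fin.ne_of_val_ne (Nat.ne_of_lt hci)
  have hρi : ρ i = i := hfix i le_rfl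
  have hρc : ρ c ≠ i := by
    intro h
    exact hci' (ρ.injective (by rw [h, hρi]))
  set σ := ρ * Equiv.swap c i with hσ
  have hσi : σ i = ρ c := by
    rw [hσ, Equiv.Perm.mul_apply, Equiv.swap_apply_right]
  have hσc : σ c = i := by
    rw [hσ, Equiv.Perm.mul_apply, Equiv.swap_apply_left, hρi]
  have hσinv : σ⁻¹ i = c := by
    rw [Equiv.Perm.inv_eq_iff_eq]; exact hσc.symm
  have hfixσ : FixAbove (i.val + 1) σ := by
    intro x hx
    have hxc : x ≠ c := by
      intro h; subst h; omega
    have hxi : x ≠ i := by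
      intro h; subst h; omega
    rw [hσ, Equiv.Perm.mul_apply, Equiv.swap_apply_of_ne_of_ne hxc hxi]
    exact hfix x (by omega)
  have hkey : Fa M (i.val + 1) σ = Fa M i.val ρ ∘ M.s i c := by
    have hk : i.val < n := i.isLt
    rw [Fa, dif_pos hk]
    simp only [Fin.eta]
    rw [if_neg (by rw [hσi]; exact hρc), hσinv]
    have : σ * Equiv.swap i c = ρ := by
      rw [hσ, Equiv.swap_comm c i, mul_assoc, Equiv.swap_mul_self, mul_one]
    rw [this]
  calc G M σ = Fa M (i.val + 1) σ :=
        Fa_stab M n (i.val + 1) σ (Nat.succ_le_of_lt i.isLt) hfixσ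
    _ = Fa M i.val ρ ∘ M.s i c := hkey
    _ = G M ρ ∘ M.s i c := by
        rw [show Fa M i.val ρ = G M ρ from
          (Fa_stab M n i.val ρ (le_of_lt i.isLt) hfix).symm]

theorem G_main : ∀ k (ρ : Equiv.Perm (Fin n)), FixAbove k ρ → ∀ a b : Fin n, a ≠ b →
    a.val < k → b.val < k → G M (ρ * Equiv.swap a b) = G M ρ ∘ M.s a b := by
  intro k
  induction k using Nat.strong_induction_on with
  | _ k ih =>
    match k with
    | 0 => exact fun ρ _ a b _ h _ => absurd h (Nat.not_lt_zero _)
    | (k+1) =>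
      intro ρ hfix a b hab ha hb
      by_cases hk : k < n
      case neg =>
        have hfix' : FixAbove k ρ := by
          intro x hx
          exact absurd x.isLt (by omega)
        exact ih k (Nat.lt_succ_self k) ρ hfix' a b hab (by
          have := a.isLt; omega) (by have := b.isLt; omega)
      case pos =>
        set m : Fin n := ⟨k, hk⟩ with hm
        have hmk : m.val = k := rfl
        by_cases hρm : ρ m = m
        · -- m is fixed by ρ
          have hfixk : FixAbove k ρ := by
            intro x hx
            rcases Nat.eq_or_lt_of_le hx with h | h
            · have : x = m := Fin.ext (by omega)
              rw [this]; exact hρm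
            · exact hfix x h
          by_cases hak : a.val < k <;> by_cases hbk : b.val < k
          · exact ih k (Nat.lt_succ_self k) ρ hfixk a b hab hak hbk
          · have hb' : b = m := Fin.ext (by omega)
            subst hb'
            rw [G_step M m a (by omega) ρ hfixk,
              M.symm m a (Fin.ne_of_val_ne (by omega))]
          · have ha' : a = m := Fin.ext (by omega)
            subst ha'
            rw [Equiv.swap_comm m b, M.symm m b hab,
              G_step M m b (by omega) ρ hfixk,
              M.symm m b hab]
          · exact absurd (Fin.ext (by omega) : a = b) hab
        · -- ρ moves m; m is the top moved point
          set j := ρ⁻¹ m with hj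
          have hρj : ρ j = m := Equiv.apply_symm_apply ρ m
          have hjm : j ≠ m := by
            intro h; rw [h] at hρj; exact hρm hρj
          have hjk : j.val < k := by
            rcases Nat.lt_or_ge j.val k with h | h
            · exact h
            · rcases Nat.eq_or_lt_of_le h with h' | h'
              · exact absurd (Fin.ext h'.symm : j = m) hjm
              · exfalso
                rw [hfix j h'] at hρj
                exact hjm hρj
          set ρ' := ρ * Equiv.swap m j with hρ'
          have hρρ' : ρ = ρ' * Equiv.swap m j := by
            rw [hρ', mul_assoc, Equiv.swap_mul_self, mul_one]
          have hfix' : FixAbove k ρ' := by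
            intro x hx
            rcases Nat.eq_or_lt_of_le hx with h | h
            · have : x = m := Fin.ext (by omega)
              rw [this, hρ', Equiv.Perm.mul_apply, Equiv.swap_apply_left, hρj]
            · have hxm : x ≠ m := Fin.ne_of_val_ne (by omega)
              have hxj : x ≠ j := Fin.ne_of_val_ne (by omega)
              rw [hρ', Equiv.Perm.mul_apply, Equiv.swap_apply_of_ne_of_ne hxm hxj]
              exact hfix x h
          have hfixmul : ∀ (τ : Equiv.Perm (Fin n)) (c d : Fin n), FixAbove k τ →
              c.val < k → d.val < k → FixAbove k (τ * Equiv.swap c d) := by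
            intro τ c d hτ hc hd x hx
            have hxc : x ≠ c := Fin.ne_of_val_ne (by omega)
            have hxd : x ≠ d := Fin.ne_of_val_ne (by omega)
            rw [Equiv.Perm.mul_apply, Equiv.swap_apply_of_ne_of_ne hxc hxd]
            exact hτ x hx
          have hmj : m ≠ j := Ne.symm hjm
          have hGρ : G M ρ = G M ρ' ∘ M.s m j := by
            calc G M ρ = Fa M (k+1) ρ :=
                  Fa_stab M n (k+1) ρ (Nat.succ_le_of_lt hk) hfix
              _ = Fa M k ρ' ∘ M.s m j := by
                  rw [Fa, dif_pos hk, ← hm, ← hj, if_neg hρm, ← hρ']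
              _ = G M ρ' ∘ M.s m j := by
                  rw [show Fa M k ρ' = G M ρ' from
                    (Fa_stab M n k ρ' (le_of_lt hk) hfix').symm]
          -- the case b (or a) equal to the top point m
          have main_cm : ∀ c : Fin n, c ≠ m → c.val < k + 1 →
              G M (ρ * Equiv.swap c m) = G M ρ ∘ M.s c m := by
            intro c hcm hck1
            have hck : c.val < k := by
              have : c.val ≠ k := fun h => hcm (Fin.ext h)
              omega
            by_cases hcj : c = j
            · subst hcj
              rw [Equiv.swap_comm j m, ← hρ', hGρ, M.symm j m hjm]
              funext x
              simp only [Function.comp_apply]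
              rw [M.invol m j hmj x]
            · -- c ∉ {m, j}
              have hperm : ρ * Equiv.swap c m =
                  ρ' * Equiv.swap c j * Equiv.swap j m := by
                rw [hρ']
                simp only [mul_assoc]
                congr 1
                rw [← swap_id2 hmj hcm hcj, ← mul_assoc, Equiv.swap_mul_self, one_mul]
              have hIH : G M (ρ' * Equiv.swap c j) = G M ρ' ∘ M.s c j :=
                ih k (Nat.lt_succ_self k) ρ' hfix' c j hcj hck hjk
              have hfix'' : FixAbove k (ρ' * Equiv.swap c j) :=
                hfixmul ρ' c j hfix' hck hjk
              have hstep : G M (ρ' * Equiv.swap c j * Equiv.swap j m) =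
                  G M (ρ' * Equiv.swap c j) ∘ M.s m j :=
                G_step M m j hjk _ hfix''
              rw [hperm, hstep, hIH, hGρ]
              funext x
              simp only [Function.comp_apply]
              congr 1
              calc M.s c j (M.s m j x) = M.s c j (M.s j m x) := by
                    rw [M.symm m j hmj]
                _ = M.s c m (M.s c j x) := braid' M c j m hcj hjm hcm x
                _ = M.s m c (M.s c j x) := by rw [M.symm c m hcm]
                _ = M.s m j (M.s m c x) := braid' M m c j (Ne.symm hcm) hcj hmj x
                _ = M.s m j (M.s c m x) := by rw [M.symm m c (Ne.symm hcm)]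
          -- the case b (or a) equal to j
          have main_cj : ∀ c : Fin n, c ≠ j → c ≠ m → c.val < k →
              G M (ρ * Equiv.swap c j) = G M ρ ∘ M.s c j := by
            intro c hcj hcm hck
            have hperm : ρ * Equiv.swap c j =
                ρ' * Equiv.swap c j * Equiv.swap c m := by
              rw [hρ']
              simp only [mul_assoc]
              congr 1
              rw [← swap_id1 hmj hcm hcj, ← mul_assoc, Equiv.swap_mul_self, one_mul]
            have hIH : G M (ρ' * Equiv.swap c j) = G M ρ' ∘ M.s c j :=
              ih k (Nat.lt_succ_self k) ρ' hfix' c j hcj hck hjk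
            have hfix'' : FixAbove k (ρ' * Equiv.swap c j) :=
              hfixmul ρ' c j hfix' hck hjk
            have hstep : G M (ρ' * Equiv.swap c j * Equiv.swap c m) =
                G M (ρ' * Equiv.swap c j) ∘ M.s m c :=
              G_step M m c hck _ hfix''
            rw [hperm, hstep, hIH, hGρ]
            funext x
            simp only [Function.comp_apply]
            congr 1
            calc M.s c j (M.s m c x) = M.s j c (M.s m c x) := by rw [M.symm c j hcj]
              _ = M.s j c (M.s c m x) := by rw [M.symm m c (Ne.symm hcm)]
              _ = M.s j m (M.s j c x) := braid' M j c m (Ne.symm hcj) hcm hjm x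
              _ = M.s m j (M.s j c x) := by rw [M.symm j m hjm]
              _ = M.s m j (M.s c j x) := by rw [M.symm j c (Ne.symm hcj)]
          -- final dispatch
          by_cases hbm : b = m
          · subst hbm
            exact main_cm a hab ha
          · by_cases ham : a = m
            · subst ham
              rw [Equiv.swap_comm m b, M.symm m b hab]
              exact main_cm b hbm hb
            · have hak : a.val < k := by
                have : a.val ≠ k := fun h => ham (Fin.ext h)
                omega
              have hbk : b.val < k := by
                have : b.val ≠ k := fun h => hbm (Fin.ext h)
                omega
              by_cases hbj : b = j
              · subst hbj
                exact main_cj a hab ham hak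
              · by_cases haj : a = j
                · subst haj
                  rw [Equiv.swap_comm j b, M.symm j b hab]
                  exact main_cj b hbj hbm hbk
                · -- disjoint case
                  have hperm : ρ * Equiv.swap a b =
                      ρ' * Equiv.swap a b * Equiv.swap j m := by
                    rw [hρ']
                    simp only [mul_assoc]
                    congr 1
                    rw [swap_disj (a := a) (b := b) (c := j) (d := m) haj ham hbj hbm]
                    rw [Equiv.swap_comm j m, ← mul_assoc, Equiv.swap_mul_self, one_mul]
                  have hIH : G M (ρ' * Equiv.swap a b) = G M ρ' ∘ M.s a b :=
                    ih k (Nat.lt_succ_self k) ρ' hfix' a b hab hak hbk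
                  have hfix'' : FixAbove k (ρ' * Equiv.swap a b) :=
                    hfixmul ρ' a b hfix' hak hbk
                  have hstep : G M (ρ' * Equiv.swap a b * Equiv.swap j m) =
                      G M (ρ' * Equiv.swap a b) ∘ M.s m j :=
                    G_step M m j hjk _ hfix''
                  rw [hperm, hstep, hIH, hGρ]
                  funext x
                  simp only [Function.comp_apply]
                  congr 1
                  exact M.comm a b m j hab hmj ham haj hbm hbj x


theorem G_swap (ρ : Equiv.Perm (Fin n)) (i j : Fin n) (hij : i ≠ j) :
    G M (ρ * Equiv.swap i j) = G M ρ ∘ M.s i j :=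
  G_main M n ρ (fun x hx => absurd x.isLt (by omega)) i j hij i.isLt j.isLt

theorem G_inf (ρ : Equiv.Perm (Fin n)) (x y : A) :
    G M ρ (x ⊓ y) = G M ρ x ⊓ G M ρ y := Fa_inf M n ρ x y

theorem G_compl (ρ : Equiv.Perm (Fin n)) (x : A) :
    G M ρ xᶜ = (G M ρ x)ᶜ := Fa_compl M n ρ x

theorem G_top (ρ : Equiv.Perm (Fin n)) : G M ρ ⊤ = ⊤ := Fa_top M n ρ

theorem G_inv (ρ : Equiv.Perm (Fin n)) : ∃ g : A → A,
    (∀ x y : A, x ≤ y → g x ≤ g y) ∧ (∀ x, g (G M ρ x) = x) ∧ (∀ x, G M ρ (g x) = x) :=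
  Fa_inv M n ρ

theorem G_bot (ρ : Equiv.Perm (Fin n)) : G M ρ ⊥ = ⊥ := Fa_bot M n ρ
end TAhelper

open TAhelper

/-- omitting types: for a countable transposition algebra `A` of dimension
`n ≥ 2`, a nonzero `a ∈ A` and a set `X ⊆ A` whose greatest lower bound is `0`, there is a
homomorphism `h : A → 𝒫(Perm(Fin n))` with `h a ≠ ∅` that carries the meet of `X` to the
empty intersection: `⋂_{x ∈ X} h x = ∅`. -/
theorem transpositionAlgebra_omitting_types (n : ℕ) (hn : 2 ≤ n)
    {A : Type*} [BooleanAlgebra A] [Countable A] (M : TranspositionAlgebra (Fin n) A)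
    (a : A) (ha : a ≠ ⊥) (X : Set A) (hX : IsGLB X ⊥) :
    ∃ h : A → Set (Equiv.Perm (Fin n)),
      h a ≠ ∅ ∧
      (∀ x y : A, h (x ⊓ y) = h x ∩ h y) ∧
      (∀ x : A, h xᶜ = Set.univ \ h x) ∧
      h ⊤ = Set.univ ∧
      (∀ i j : Fin n, i ≠ j → ∀ x : A,
        h (M.s i j x) = {ξ : Equiv.Perm (Fin n) | ξ * Equiv.swap i j ∈ h x}) ∧
      (⋂ x ∈ X, h x) = ∅ := by
  classical
  have hAne : Nonempty A := ⟨a⟩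
  obtain ⟨e, he⟩ := exists_surjective_nat A
  -- given any nonzero b and any permutation, we can shrink b to avoid the glb of X
  have hfind : ∀ b : A, b ≠ ⊥ → ∀ ρ : Equiv.Perm (Fin n),
      ∃ x ∈ X, b ⊓ (G M ρ x)ᶜ ≠ ⊥ := by
    intro b hb ρ
    by_contra hcon
    push_neg at hcon
    obtain ⟨g, hgmono, hgl, hgr⟩ := G_inv M ρ
    have hlb : g b ∈ lowerBounds X := by
      intro x hx
      have h1 : b ≤ G M ρ x := by
        have hd : Disjoint b (G M ρ x)ᶜ := disjoint_iff.mpr (hcon x hx)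
        rwa [disjoint_compl_right_iff] at hd
      have h2 := hgmono b (G M ρ x) h1
      rwa [hgl x] at h2
    have hgb : g b = ⊥ := le_bot_iff.mp (hX.2 hlb)
    apply hb
    rw [← hgr b, hgb, G_bot]
  -- find a base element handling all (finitely many) permutations
  have hbase : ∃ b₀ : A, b₀ ≠ ⊥ ∧ b₀ ≤ a ∧
      ∀ ρ : Equiv.Perm (Fin n), ∃ x ∈ X, b₀ ≤ (G M ρ x)ᶜ := by
    have hlist : ∀ l : List (Equiv.Perm (Fin n)), ∃ b₀ : A, b₀ ≠ ⊥ ∧ b₀ ≤ a ∧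
        ∀ ρ ∈ l, ∃ x ∈ X, b₀ ≤ (G M ρ x)ᶜ := by
      intro l
      induction l with
      | nil => exact ⟨a, ha, le_rfl, by simp⟩
      | cons ρ l ihl =>
        obtain ⟨b₀, hb0, hba, hbl⟩ := ihl
        obtain ⟨x, hxX, hx⟩ := hfind b₀ hb0 ρ
        refine ⟨b₀ ⊓ (G M ρ x)ᶜ, hx, le_trans inf_le_left hba, ?_⟩
        intro ρ' hρ'
        rcases List.mem_cons.mp hρ' with h | h
        · subst h; exact ⟨x, hxX, inf_le_right⟩
        · obtain ⟨y, hyX, hy⟩ := hbl ρ' h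
          exact ⟨y, hyX, le_trans inf_le_left hy⟩
    obtain ⟨b₀, h1, h2, h3⟩ := hlist (Finset.univ.toList)
    exact ⟨b₀, h1, h2, fun ρ => h3 ρ (by simp)⟩
  obtain ⟨b₀, hb0ne, hb0a, hb0X⟩ := hbase
  -- the dwindling chain of nonzero elements deciding every element of A
  let c : ℕ → A := fun k =>
    Nat.rec b₀ (fun k ck => if ck ⊓ e k = ⊥ then ck ⊓ (e k)ᶜ else ck ⊓ e k) k
  have hc0 : c 0 = b₀ := rfl
  have hcsucc : ∀ k, c (k+1) = if c k ⊓ e k = ⊥ then c k ⊓ (e k)ᶜ else c k ⊓ e k :=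
    fun k => rfl
  have hcne : ∀ k, c k ≠ ⊥ := by
    intro k; induction k with
    | zero => exact hb0ne
    | succ k ihk =>
      rw [hcsucc k]
      split_ifs with h
      · have h1 : c k ≤ (e k)ᶜ := (disjoint_iff.mpr h).le_compl_right
        rw [inf_eq_left.mpr h1]; exact ihk
      · exact h
  have hcstep : ∀ k, c (k+1) ≤ c k := by
    intro k; rw [hcsucc k]; split_ifs <;> exact inf_le_left
  have hcmono : ∀ k l : ℕ, k ≤ l → c l ≤ c k := fun k l hkl =>
    antitone_nat_of_succ_le hcstep hkl
  -- the ultrafilter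
  set U : A → Prop := fun x => ∃ k, c k ≤ x with hU
  have hUmono : ∀ {x y : A}, x ≤ y → U x → U y := by
    rintro x y hxy ⟨k, hk⟩; exact ⟨k, hk.trans hxy⟩
  have hUinf : ∀ x y : A, U (x ⊓ y) ↔ U x ∧ U y := by
    intro x y
    constructor
    · intro h; exact ⟨hUmono inf_le_left h, hUmono inf_le_right h⟩
    · rintro ⟨⟨k, hk⟩, ⟨l, hl⟩⟩
      exact ⟨max k l, le_inf ((hcmono k _ (le_max_left _ _)).trans hk)
        ((hcmono l _ (le_max_right _ _)).trans hl)⟩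
  have hUbot : ¬ U ⊥ := by
    rintro ⟨k, hk⟩; exact hcne k (le_bot_iff.mp hk)
  have hUcompl : ∀ x : A, U xᶜ ↔ ¬ U x := by
    intro x
    constructor
    · rintro ⟨k, hk⟩ ⟨l, hl⟩
      apply hUbot
      refine ⟨max k l, ?_⟩
      have h1 : c (max k l) ≤ x ⊓ xᶜ :=
        le_inf ((hcmono l _ (le_max_right _ _)).trans hl)
          ((hcmono k _ (le_max_left _ _)).trans hk)
      rwa [inf_compl_eq_bot] at h1
    · intro hnx
      obtain ⟨k, hek⟩ := he x
      refine ⟨k+1, ?_⟩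
      rw [hcsucc k, hek]
      split_ifs with hsplit
      · exact inf_le_right
      · exact absurd ⟨k+1, by rw [hcsucc k, hek, if_neg hsplit]; exact inf_le_right⟩ hnx
  -- the homomorphism
  refine ⟨fun x => {ξ : Equiv.Perm (Fin n) | U (G M ξ x)}, ?_, ?_, ?_, ?_, ?_, ?_⟩
  · apply Set.nonempty_iff_ne_empty.mp
    refine ⟨1, ?_⟩
    show U (G M 1 a)
    rw [G_one]
    exact ⟨0, hb0a⟩
  · intro x y
    ext ξ
    simp only [Set.mem_setOf_eq, Set.mem_inter_iff]
    rw [G_inf]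
    exact hUinf _ _
  · intro x
    ext ξ
    simp only [Set.mem_setOf_eq, Set.mem_diff, Set.mem_univ, true_and]
    rw [G_compl]
    exact hUcompl _
  · ext ξ
    simp only [Set.mem_setOf_eq, Set.mem_univ, iff_true]
    rw [G_top]
    exact ⟨0, le_top⟩
  · intro i j hij x
    ext ξ
    simp only [Set.mem_setOf_eq]
    rw [G_swap M ξ i j hij]
    rfl
  · apply Set.eq_empty_iff_forall_notMem.mpr
    intro ξ hmem
    rw [Set.mem_iInter₂] at hmem
    obtain ⟨x, hxX, hxle⟩ := hb0X ξ
    have h1 : U ((G M ξ x)ᶜ) := ⟨0, hxle⟩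
    have h2 : U (G M ξ x) := hmem x hxX
    exact (hUcompl _).mp h1 h2
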